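/- arXiv:1709.06607 — 3 statements merged into one kernel-verified Lean document; each statement's English description precedes it below -/
import Mathlib

section
/- The smallest eigenvalue of the Schur complement of a positive definite block in a symmetric positive definite matrix is at least the smallest eigenvalue of the whole matrix: if M = [[A, B], [Bᵀ, C]] is symmetric positive definite, then eig_min(C − BᵀA⁻¹B) ≥ eig_min(M). -/
open Matrix

theorem schur_complement_eig_min {k m : ℕ}
    (A : Matrix (Fin k) (Fin k) ℝ) (B : Matrix (Fin k) (Fin m) ℝ)
    (C : Matrix (Fin m) (Fin m) ℝ)
    (hM : (fromBlocks A B Bᵀ C).PosDef) (lmin : ℝ)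
    (hlmin : ∀ w : (Fin k ⊕ Fin m) → ℝ,
      lmin * (w ⬝ᵥ w) ≤ w ⬝ᵥ ((fromBlocks A B Bᵀ C).mulVec w)) :
    ∀ v : Fin m → ℝ, lmin * (v ⬝ᵥ v) ≤ v ⬝ᵥ ((C - Bᵀ * A⁻¹ * B).mulVec v) := by
  intro v
  have dps : ∀ {p : ℕ} (u : Fin p → ℝ), 0 ≤ u ⬝ᵥ u := fun u =>
    Finset.sum_nonneg fun i _ => mul_self_nonneg _
  have hA : A.PosDef := by
    refine PosDef.of_dotProduct_mulVec_pos ?_ ?_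
    · have h := hM.1
      rw [isHermitian_fromBlocks_iff] at h
      exact h.1
    · intro x hx
      have := hM.dotProduct_mulVec_pos (x := Sum.elim x 0) (by
        intro h
        apply hx
        funext i
        exact congrFun h (Sum.inl i))
      simpa [fromBlocks_mulVec, sumElim_dotProduct_sumElim] using this
  have hdet : IsUnit A.det := isUnit_iff_ne_zero.mpr (ne_of_gt hA.det_pos)
  set x : Fin k → ℝ := -((A⁻¹ * B).mulVec v) with hxdef
  set w : (Fin k ⊕ Fin m) → ℝ := Sum.elim x v with hwdef
  have hAx : A.mulVec x = -(B.mulVec v) := by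
    rw [hxdef, Matrix.mulVec_neg, ← Matrix.mulVec_mulVec, Matrix.mulVec_mulVec,
      Matrix.mul_nonsing_inv A hdet, Matrix.one_mulVec]
  have key : w ⬝ᵥ ((fromBlocks A B Bᵀ C).mulVec w) = v ⬝ᵥ ((C - Bᵀ * A⁻¹ * B).mulVec v) := by
    rw [hwdef, fromBlocks_mulVec, sumElim_dotProduct_sumElim]
    simp only [Sum.elim_comp_inl, Sum.elim_comp_inr]
    rw [hAx]
    have h1 : -(B.mulVec v) + B.mulVec v = 0 := by ring
    rw [h1, dotProduct_zero, zero_add, Matrix.sub_mulVec, dotProduct_sub]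
    have h2 : (Bᵀ * A⁻¹ * B).mulVec v = Bᵀ.mulVec (-x) := by
      rw [hxdef, neg_neg, Matrix.mulVec_mulVec, Matrix.mul_assoc]
    rw [h2, Matrix.mulVec_neg, dotProduct_add, dotProduct_neg]
    rw [hxdef, neg_neg]; ring
  have hww : w ⬝ᵥ w = x ⬝ᵥ x + v ⬝ᵥ v := by
    rw [hwdef, sumElim_dotProduct_sumElim]
  have hvv : v ⬝ᵥ v ≤ w ⬝ᵥ w := by
    rw [hww]; nlinarith [dps x]
  rcases le_or_gt 0 lmin with hl | hl
  · calc lmin * (v ⬝ᵥ v) ≤ lmin * (w ⬝ᵥ w) := by nlinarith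
    _ ≤ w ⬝ᵥ ((fromBlocks A B Bᵀ C).mulVec w) := hlmin w
    _ = _ := key
  · have h0 : 0 ≤ w ⬝ᵥ ((fromBlocks A B Bᵀ C).mulVec w) := by
      simpa using hM.posSemidef.dotProduct_mulVec_nonneg w
    have : lmin * (v ⬝ᵥ v) ≤ 0 := mul_nonpos_of_nonpos_of_nonneg hl.le (dps v)
    linarith [key ▸ h0]
end

section
/- For a nonsingular k × k matrix A_k with eigenvalues in (a₁, a₂) ⊂ (0, ∞), the pMOM normalizing constant d_k, defined by d_k⁻¹ = ∫ (2π)^{-k/2} |A_k|^{1/2} exp(-βᵀA_kβ/2) ∏_{i=1}^k β_i^{2r} dβ evaluated with τσ² = 1, satisfies (a₁/a₂)^{k/2}(a₁^r/(2r-1)!!)^k < d_k < (a₂/a₁)^{k/2}(a₂^r/(2r-1)!!)^k. -/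
open Matrix Real MeasureTheory

/-- The double factorial `(2r-1)!! = 1 · 3 · 5 ⋯ (2r-1)`. -/
noncomputable def oddDoubleFactorial (r : ℕ) : ℝ :=
  ∏ i ∈ Finset.range r, (2 * (i:ℝ) + 1)

lemma odf_pos (r : ℕ) : 0 < oddDoubleFactorial r := by
  apply Finset.prod_pos; intro i _; positivity

lemma integrable_pow_gauss (n : ℕ) {a : ℝ} (ha : 0 < a) :
    Integrable (fun x : ℝ => x ^ n * exp (-(a * x ^ 2) / 2)) := by
  have h := integrable_rpow_mul_exp_neg_mul_sq (b := a/2) (by linarith) (s := (n:ℝ))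
    (by exact lt_of_lt_of_le (by norm_num) (Nat.cast_nonneg n))
  have he : ∀ x : ℝ, x ^ (n:ℝ) * exp (-(a/2) * x ^ 2) = x ^ n * exp (-(a * x ^ 2) / 2) := by
    intro x
    rw [Real.rpow_natCast]
    ring_nf
  exact (funext he) ▸ h

lemma gauss_moment (r : ℕ) {a : ℝ} (ha : 0 < a) :
    ∫ x : ℝ, x ^ (2*r) * exp (-(a * x ^ 2) / 2)
      = oddDoubleFactorial r / a ^ r * Real.sqrt (2 * π / a) := by
  induction r with
  | zero =>
    simp only [mul_zero, pow_zero, one_mul, oddDoubleFactorial, Finset.range_zero,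
      Finset.prod_empty, one_div]
    have h := integral_gaussian (a/2)
    have he : ∀ x : ℝ, exp (-(a/2) * x ^ 2) = exp (-(a * x ^ 2) / 2) := by
      intro x; ring_nf
    rw [funext he] at h
    rw [h]
    rw [show π / (a/2) = 2 * π / a by ring]
    simp
  | succ n ih =>
    have hI0 := integrable_pow_gauss (2*n) ha
    have hI2 := integrable_pow_gauss (2*n+2) ha
    have hf : Integrable (fun x : ℝ => x ^ (2*n+1) * exp (-(a * x ^ 2) / 2)) :=
      integrable_pow_gauss (2*n+1) ha
    have key : ∫ x : ℝ, ((2*(n:ℝ)+1) * (x ^ (2*n) * exp (-(a * x ^ 2) / 2))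
        - a * (x ^ (2*n+2) * exp (-(a * x ^ 2) / 2))) = 0 := by
      apply integral_eq_zero_of_hasDerivAt_of_integrable
        (f := fun x => x ^ (2*n+1) * exp (-(a * x ^ 2) / 2))
      · intro x
        have h1 : HasDerivAt (fun x : ℝ => x ^ (2*n+1)) ((2*(n:ℝ)+1) * x ^ (2*n)) x := by
          have := hasDerivAt_pow (2*n+1) x
          push_cast at this
          convert this using 2
        have h2 : HasDerivAt (fun x : ℝ => -(a * x ^ 2) / 2) (-(a * x)) x := by
          have := ((hasDerivAt_pow 2 x).const_mul a).neg.div_const 2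
          refine this.congr_deriv ?_
          push_cast; ring
        have h3 := h2.exp
        have h4 := h1.mul h3
        refine h4.congr_deriv ?_
        ring
      · exact (hI0.const_mul _).sub (hI2.const_mul a)
      · exact hf
    rw [integral_sub (hI0.const_mul _) (hI2.const_mul a), integral_const_mul,
      integral_const_mul, ih, sub_eq_zero] at key
    have h22 : 2*(n+1) = 2*n+2 := by ring
    rw [h22]
    have ha' : (a:ℝ) ≠ 0 := ne_of_gt ha
    have : ∫ x : ℝ, x ^ (2*n+2) * exp (-(a * x ^ 2) / 2)
        = (2*(n:ℝ)+1) * (oddDoubleFactorial n / a ^ n * Real.sqrt (2*π/a)) / a := by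
      field_simp at key ⊢
      linarith [key]
    have hodd : oddDoubleFactorial (n+1) = oddDoubleFactorial n * (2*(n:ℝ)+1) := by
      rw [oddDoubleFactorial, Finset.prod_range_succ, ← oddDoubleFactorial]
    rw [this, hodd]
    field_simp
    ring

lemma quad_repr {k : ℕ} {A : Matrix (Fin k) (Fin k) ℝ} (hA : A.IsHermitian) (β : Fin k → ℝ) :
    ∃ y : Fin k → ℝ, β ⬝ᵥ A.mulVec β = ∑ i, hA.eigenvalues i * (y i)^2 ∧
      ∑ i, (β i)^2 = ∑ i, (y i)^2 := by
  set U : Matrix (Fin k) (Fin k) ℝ := (hA.eigenvectorUnitary : Matrix (Fin k) (Fin k) ℝ) with hU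
  have hUu : U ∈ Matrix.unitaryGroup (Fin k) ℝ := hA.eigenvectorUnitary.2
  have hUU : U * star U = 1 := (Matrix.mem_unitaryGroup_iff).mp hUu
  set y : Fin k → ℝ := (star U) *ᵥ β with hy
  have hstar : star U = Uᵀ := by
    ext i j; simp [Matrix.star_apply]
  have hvec : β ᵥ* U = y := by
    rw [hy, hstar, Matrix.mulVec_transpose]
  refine ⟨y, ?_, ?_⟩
  · conv_lhs => rw [hA.spectral_theorem, Unitary.conjStarAlgAut_apply]
    rw [← Matrix.mulVec_mulVec, ← Matrix.mulVec_mulVec, Matrix.dotProduct_mulVec, hvec]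
    rw [RCLike.ofReal_real_eq_id]
    simp only [Function.comp_def, id]
    rw [show (star (hA.eigenvectorUnitary : Matrix (Fin k) (Fin k) ℝ)) *ᵥ β = y from rfl]
    simp [dotProduct, Matrix.mulVec_diagonal]
    congr 1; ext i; ring
  · have h1 : ∑ i, (y i)^2 = y ⬝ᵥ y := by simp [dotProduct, sq]
    have h2 : ∑ i, (β i)^2 = β ⬝ᵥ β := by simp [dotProduct, sq]
    rw [h1, h2, hy, hstar, Matrix.mulVec_transpose, ← Matrix.dotProduct_mulVec,
      ← Matrix.mulVec_transpose, Matrix.mulVec_mulVec, ← hstar, hUU, Matrix.one_mulVec]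

lemma prod_gauss_integrable (k r : ℕ) {a : ℝ} (ha : 0 < a) :
    Integrable (fun β : Fin k → ℝ => ∏ i, ((β i)^(2*r) * exp (-(a * (β i)^2)/2))) :=
  Integrable.fin_nat_prod (f := fun _ x => x^(2*r) * exp (-(a * x^2)/2))
    (fun _ => integrable_pow_gauss _ ha)

lemma prod_gauss_integral (k r : ℕ) {a : ℝ} (ha : 0 < a) :
    ∫ β : Fin k → ℝ, ∏ i, ((β i)^(2*r) * exp (-(a * (β i)^2)/2))
      = (oddDoubleFactorial r / a^r * Real.sqrt (2*π/a))^k := by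
  rw [integral_fintype_prod_volume_eq_pow (fun x : ℝ => x^(2*r) * exp (-(a * x^2)/2)),
    gauss_moment r ha, Fintype.card_fin]

lemma exp_split (k r : ℕ) (a : ℝ) (β : Fin k → ℝ) :
    exp (-(a * ∑ i, (β i)^2)/2) * ∏ i, (β i)^(2*r)
      = ∏ i, ((β i)^(2*r) * exp (-(a * (β i)^2)/2)) := by
  have h : -(a * ∑ i, (β i)^2)/2 = ∑ i, (-(a * (β i)^2)/2) := by
    rw [Finset.mul_sum, ← Finset.sum_neg_distrib, Finset.sum_div]
  rw [h, Real.exp_sum, Finset.prod_mul_distrib, mul_comm]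

theorem pMOM_normalizing_constant_bounds {k : ℕ} (hk : 0 < k) (r : ℕ) (hr : 0 < r)
    (A : Matrix (Fin k) (Fin k) ℝ) (a₁ a₂ : ℝ) (ha₁ : 0 < a₁) (ha : a₁ < a₂)
    (hA : A.IsHermitian) (hApd : A.PosDef)
    (hAeig : ∀ i, a₁ < hA.eigenvalues i ∧ hA.eigenvalues i < a₂)
    (dk : ℝ) (hdk : 0 < dk)
    (hdef : dk⁻¹ = ∫ β : Fin k → ℝ,
        (2*π) ^ (-(k:ℝ)/2) * Real.sqrt A.det *
          exp (-(β ⬝ᵥ A.mulVec β)/2) * ∏ i, (β i)^(2*r)) :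
    (a₁/a₂) ^ ((k:ℝ)/2) * (a₁^r / oddDoubleFactorial r) ^ k < dk ∧
    dk < (a₂/a₁) ^ ((k:ℝ)/2) * (a₂^r / oddDoubleFactorial r) ^ k := by
  have ha₂ : 0 < a₂ := lt_trans ha₁ ha
  have h2π : (0:ℝ) < 2*π := by positivity
  set D := oddDoubleFactorial r with hDdef
  have hD : 0 < D := odf_pos r
  set c : ℝ := (2*π) ^ (-(k:ℝ)/2) with hcdef
  have hc : 0 < c := rpow_pos_of_pos h2π _
  have hlampos : ∀ i, 0 < hA.eigenvalues i := fun i => lt_trans ha₁ (hAeig i).1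
  have hdet : A.det = ∏ i, hA.eigenvalues i := by
    have := hA.det_eq_prod_eigenvalues
    simpa using this
  have hdetpos : 0 < A.det := by
    rw [hdet]; exact Finset.prod_pos (fun i _ => hlampos i)
  have hs : 0 < Real.sqrt A.det := Real.sqrt_pos.mpr hdetpos
  -- sqrt det bounds
  have hne : (Finset.univ : Finset (Fin k)).Nonempty := by
    exact Finset.univ_nonempty_iff.mpr (Fin.pos_iff_nonempty.mp hk)
  have hrw : ∀ (a : ℝ), 0 < a → Real.sqrt (a^k) = a ^ ((k:ℝ)/2) := by
    intro a hap
    rw [Real.sqrt_eq_rpow, ← Real.rpow_natCast a k, ← Real.rpow_mul (le_of_lt hap)]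
    congr 1; ring
  have hdetlt : Real.sqrt A.det < a₂ ^ ((k:ℝ)/2) := by
    rw [← hrw a₂ ha₂]
    apply Real.sqrt_lt_sqrt (le_of_lt hdetpos)
    rw [hdet]
    calc ∏ i, hA.eigenvalues i < ∏ _i : Fin k, a₂ :=
          Finset.prod_lt_prod_of_nonempty (fun i _ => hlampos i) (fun i _ => (hAeig i).2) hne
      _ = a₂ ^ k := by rw [Finset.prod_const, Finset.card_univ, Fintype.card_fin]
  have hdetgt : a₁ ^ ((k:ℝ)/2) < Real.sqrt A.det := by
    rw [← hrw a₁ ha₁]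
    apply Real.sqrt_lt_sqrt (by positivity)
    rw [hdet]
    calc a₁ ^ k = ∏ _i : Fin k, a₁ := by rw [Finset.prod_const, Finset.card_univ, Fintype.card_fin]
      _ < ∏ i, hA.eigenvalues i :=
          Finset.prod_lt_prod_of_nonempty (fun _ _ => ha₁) (fun i _ => (hAeig i).1) hne
  -- nonneg of products of even powers
  have hprodnn : ∀ β : Fin k → ℝ, 0 ≤ ∏ i, (β i)^(2*r) := by
    intro β
    apply Finset.prod_nonneg
    intro i _
    rw [pow_mul]
    positivity
  -- pointwise bounds on the quadratic form
  have hquad : ∀ β : Fin k → ℝ,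
      a₁ * ∑ i, (β i)^2 ≤ β ⬝ᵥ A.mulVec β ∧ β ⬝ᵥ A.mulVec β ≤ a₂ * ∑ i, (β i)^2 := by
    intro β
    obtain ⟨y, hy1, hy2⟩ := quad_repr hA β
    constructor
    · rw [hy1, hy2, Finset.mul_sum]
      exact Finset.sum_le_sum (fun i _ =>
        mul_le_mul_of_nonneg_right (le_of_lt (hAeig i).1) (sq_nonneg _))
    · rw [hy1, hy2, Finset.mul_sum]
      exact Finset.sum_le_sum (fun i _ =>
        mul_le_mul_of_nonneg_right (le_of_lt (hAeig i).2) (sq_nonneg _))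
  -- the integrand
  set f : (Fin k → ℝ) → ℝ := fun β =>
    (2*π) ^ (-(k:ℝ)/2) * Real.sqrt A.det * exp (-(β ⬝ᵥ A.mulVec β)/2) * ∏ i, (β i)^(2*r)
    with hfdef
  set g : ℝ → (Fin k → ℝ) → ℝ := fun a β => ∏ i, ((β i)^(2*r) * exp (-(a * (β i)^2)/2))
    with hgdef
  have hgnn : ∀ a (β : Fin k → ℝ), 0 ≤ g a β := by
    intro a β
    apply Finset.prod_nonneg
    intro i _
    have : (0:ℝ) ≤ (β i)^(2*r) := by rw [pow_mul]; positivity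
    positivity
  -- pointwise bounds on f
  have hpt : ∀ β : Fin k → ℝ,
      (c * Real.sqrt A.det) * g a₂ β ≤ f β ∧ f β ≤ (c * Real.sqrt A.det) * g a₁ β := by
    intro β
    have hq := hquad β
    have e1 : exp (-(β ⬝ᵥ A.mulVec β)/2) ≤ exp (-(a₁ * ∑ i, (β i)^2)/2) := by
      apply Real.exp_le_exp.mpr
      have := hq.1
      linarith
    have e2 : exp (-(a₂ * ∑ i, (β i)^2)/2) ≤ exp (-(β ⬝ᵥ A.mulVec β)/2) := by
      apply Real.exp_le_exp.mpr
      have := hq.2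
      linarith
    constructor
    · calc (c * Real.sqrt A.det) * g a₂ β
          = c * Real.sqrt A.det * (exp (-(a₂ * ∑ i, (β i)^2)/2) * ∏ i, (β i)^(2*r)) := by
            rw [hgdef]; rw [exp_split k r a₂ β]
        _ ≤ c * Real.sqrt A.det * (exp (-(β ⬝ᵥ A.mulVec β)/2) * ∏ i, (β i)^(2*r)) := by
            apply mul_le_mul_of_nonneg_left _ (by positivity)
            exact mul_le_mul_of_nonneg_right e2 (hprodnn β)
        _ = f β := by rw [hfdef]; ring
    · calc f β = c * Real.sqrt A.det * (exp (-(β ⬝ᵥ A.mulVec β)/2) * ∏ i, (β i)^(2*r)) := by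
            rw [hfdef]; ring
        _ ≤ c * Real.sqrt A.det * (exp (-(a₁ * ∑ i, (β i)^2)/2) * ∏ i, (β i)^(2*r)) := by
            apply mul_le_mul_of_nonneg_left _ (by positivity)
            exact mul_le_mul_of_nonneg_right e1 (hprodnn β)
        _ = (c * Real.sqrt A.det) * g a₁ β := by
            rw [hgdef]; rw [exp_split k r a₁ β]
  -- integrability
  have hint_g : ∀ {a : ℝ}, 0 < a → Integrable (g a) := by
    intro a hap
    exact prod_gauss_integrable k r hap
  have hfnn : ∀ β, 0 ≤ f β := by
    intro β
    rw [hfdef]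
    have := hprodnn β
    positivity
  have hfcont : Continuous f := by
    rw [hfdef]
    apply Continuous.mul
    · apply Continuous.mul continuous_const
      apply Real.continuous_exp.comp
      apply Continuous.div_const
      apply Continuous.neg
      have : Continuous fun β : Fin k → ℝ => β ⬝ᵥ A.mulVec β := by
        simp only [dotProduct, Matrix.mulVec]
        fun_prop
      exact this
    · fun_prop
  have hint_f : Integrable f := by
    apply Integrable.mono' (((hint_g ha₁).const_mul (c * Real.sqrt A.det)))
      hfcont.aestronglyMeasurable
    filter_upwards with β
    rw [Real.norm_eq_abs, abs_of_nonneg (hfnn β)]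
    exact (hpt β).2
  -- integral bounds
  have hIg : ∀ {a : ℝ}, 0 < a → ∫ β, g a β = (D / a^r * Real.sqrt (2*π/a))^k := by
    intro a hap
    exact prod_gauss_integral k r hap
  have hle : dk⁻¹ ≤ (c * Real.sqrt A.det) * (D / a₁^r * Real.sqrt (2*π/a₁))^k := by
    rw [hdef, ← hIg ha₁, ← integral_const_mul]
    exact integral_mono hint_f ((hint_g ha₁).const_mul _) (fun β => (hpt β).2)
  have hge : (c * Real.sqrt A.det) * (D / a₂^r * Real.sqrt (2*π/a₂))^k ≤ dk⁻¹ := by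
    rw [hdef, ← hIg ha₂, ← integral_const_mul]
    exact integral_mono ((hint_g ha₂).const_mul _) hint_f (fun β => (hpt β).1)
  -- key algebraic identity
  have hJpos : ∀ {a : ℝ}, 0 < a → 0 < D / a^r * Real.sqrt (2*π/a) := by
    intro a hap
    have : (0:ℝ) < 2*π/a := by positivity
    positivity
  have halg : ∀ a b : ℝ, 0 < a → 0 < b →
      c * b ^ ((k:ℝ)/2) * (D / a^r * Real.sqrt (2*π/a))^k
        = (b/a) ^ ((k:ℝ)/2) * (D / a^r) ^ k := by
    intro a b hap hbp
    have hsq : Real.sqrt (2*π/a) ^ k = (2*π/a) ^ ((k:ℝ)/2) := by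
      rw [Real.sqrt_eq_rpow, ← Real.rpow_natCast ((2*π/a) ^ (1/(2:ℝ))) k,
        ← Real.rpow_mul (by positivity)]
      congr 1; ring
    rw [mul_pow, hsq]
    rw [Real.div_rpow (le_of_lt h2π) (le_of_lt hap), Real.div_rpow (le_of_lt hbp) (le_of_lt hap)]
    rw [hcdef, show -(k:ℝ)/2 = -((k:ℝ)/2) by ring, Real.rpow_neg (le_of_lt h2π)]
    have h1 : (0:ℝ) < (2*π) ^ ((k:ℝ)/2) := rpow_pos_of_pos h2π _
    have h2 : (0:ℝ) < a ^ ((k:ℝ)/2) := rpow_pos_of_pos hap _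
    field_simp
  have hDa₁ : (0:ℝ) < D / a₁^r := by positivity
  have hDa₂ : (0:ℝ) < D / a₂^r := by positivity
  -- upper bound on dk⁻¹ (strict)
  have hub : dk⁻¹ < (a₂/a₁) ^ ((k:ℝ)/2) * (D / a₁^r) ^ k := by
    calc dk⁻¹ ≤ (c * Real.sqrt A.det) * (D / a₁^r * Real.sqrt (2*π/a₁))^k := hle
      _ < (c * a₂ ^ ((k:ℝ)/2)) * (D / a₁^r * Real.sqrt (2*π/a₁))^k := by
          apply mul_lt_mul_of_pos_right _ (pow_pos (hJpos ha₁) k)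
          exact mul_lt_mul_of_pos_left hdetlt hc
      _ = (a₂/a₁) ^ ((k:ℝ)/2) * (D / a₁^r) ^ k := by
          rw [← halg a₁ a₂ ha₁ ha₂]
  -- lower bound on dk⁻¹ (strict)
  have hlb : (a₁/a₂) ^ ((k:ℝ)/2) * (D / a₂^r) ^ k < dk⁻¹ := by
    calc (a₁/a₂) ^ ((k:ℝ)/2) * (D / a₂^r) ^ k
        = (c * a₁ ^ ((k:ℝ)/2)) * (D / a₂^r * Real.sqrt (2*π/a₂))^k := by
          rw [halg a₂ a₁ ha₂ ha₁]
      _ < (c * Real.sqrt A.det) * (D / a₂^r * Real.sqrt (2*π/a₂))^k := by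
          apply mul_lt_mul_of_pos_right _ (pow_pos (hJpos ha₂) k)
          exact mul_lt_mul_of_pos_left hdetgt hc
      _ ≤ dk⁻¹ := hge
  -- invert
  have hinv : ∀ a b : ℝ, 0 < a → 0 < b →
      ((b/a) ^ ((k:ℝ)/2) * (D / a^r) ^ k)⁻¹ = (a/b) ^ ((k:ℝ)/2) * (a^r / D) ^ k := by
    intro a b hap hbp
    rw [mul_inv, ← Real.inv_rpow (by positivity), inv_div, ← inv_pow, inv_div]
  constructor
  · have h1 : ((a₂/a₁) ^ ((k:ℝ)/2) * (D / a₁^r) ^ k)⁻¹ < dk := by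
      have hCpos : 0 < (a₂/a₁) ^ ((k:ℝ)/2) * (D / a₁^r) ^ k := by
        have : (0:ℝ) < (a₂/a₁) ^ ((k:ℝ)/2) := rpow_pos_of_pos (by positivity) _
        positivity
      have := inv_strictAnti₀ (inv_pos.mpr hdk) hub
      rwa [inv_inv] at this
    rwa [hinv a₁ a₂ ha₁ ha₂] at h1
  · have h2 : dk < ((a₁/a₂) ^ ((k:ℝ)/2) * (D / a₂^r) ^ k)⁻¹ := by
      have hCpos : 0 < (a₁/a₂) ^ ((k:ℝ)/2) * (D / a₂^r) ^ k := by
        have : (0:ℝ) < (a₁/a₂) ^ ((k:ℝ)/2) := rpow_pos_of_pos (by positivity) _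
        positivity
      have := inv_strictAnti₀ hCpos hlb
      rwa [inv_inv] at this
    rwa [hinv a₂ a₁ ha₂ ha₁] at h2
end

section
/- Let R*_t = y⁻ᵀ(I − P_t)y and R_t = yᵀ(I − X_t C_t⁻¹ X_tᵀ)y where C_t = X_tᵀX_t + A_t/τ, P_t = X_t(X_tᵀX_t)⁻¹X_tᵀ, A_t symmetric with eigenvalues in (a₁, a₂), and the nonzero eigenvalues of X_tᵀX_t/n lie in [ε, ε⁻¹]. Then 0 ≤ R_t − R*_t ≤ (a₂/(nε))/((a₂/(nε)) + τ) · yᵀP_t y. -/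
open Matrix Real

section Aux

variable {m : Type*} [Fintype m] [DecidableEq m]

lemma psd_nonneg {A : Matrix m m ℝ} (hA : A.PosSemidef) (x : m → ℝ) :
    0 ≤ x ⬝ᵥ A *ᵥ x := by
  simpa using hA.dotProduct_mulVec_nonneg x

lemma herm_symm_form {A : Matrix m m ℝ} (hA : A.IsHermitian) (x y : m → ℝ) :
    x ⬝ᵥ A *ᵥ y = y ⬝ᵥ A *ᵥ x := by
  have ht : Aᵀ = A := by
    rw [← Matrix.conjTranspose_eq_transpose_of_trivial]; exact hA
  rw [Matrix.dotProduct_mulVec, ← Matrix.mulVec_transpose, ht, dotProduct_comm]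

lemma psd_cauchy_schwarz {A : Matrix m m ℝ} (hA : A.PosSemidef) (x y : m → ℝ) :
    (x ⬝ᵥ A *ᵥ y) ^ 2 ≤ (x ⬝ᵥ A *ᵥ x) * (y ⬝ᵥ A *ᵥ y) := by
  have key : ∀ s : ℝ, 0 ≤ (y ⬝ᵥ A *ᵥ y) * (s * s) + (2 * (x ⬝ᵥ A *ᵥ y)) * s
      + (x ⬝ᵥ A *ᵥ x) := by
    intro s
    have h0 := psd_nonneg hA (x + s • y)
    have hsymm := herm_symm_form hA.isHermitian x y
    simp only [Matrix.mulVec_add, Matrix.mulVec_smul, dotProduct_add,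
      add_dotProduct, smul_dotProduct, dotProduct_smul,
      smul_eq_mul] at h0
    rw [hsymm] at h0 ⊢
    nlinarith [h0]
  have hd := discrim_le_zero key
  rw [discrim] at hd
  nlinarith [hd]

/-- Loewner order is antitone under inversion. -/
lemma inv_antitone {A B : Matrix m m ℝ} (hA : A.PosDef) (hB : B.PosDef)
    (h : (B - A).PosSemidef) : (A⁻¹ - B⁻¹).PosSemidef := by
  refine Matrix.PosSemidef.of_dotProduct_mulVec_nonneg
    (hA.inv.isHermitian.sub hB.inv.isHermitian) fun z => ?_
  simp only [star_trivial, Matrix.sub_mulVec, dotProduct_sub]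
  rw [sub_nonneg]
  set u : m → ℝ := B⁻¹ *ᵥ z with hu
  set v : m → ℝ := A⁻¹ *ᵥ z with hv
  set p : ℝ := z ⬝ᵥ B⁻¹ *ᵥ z with hp
  set q : ℝ := z ⬝ᵥ A⁻¹ *ᵥ z with hq
  have hAmul : A *ᵥ v = z := by
    rw [hv, Matrix.mulVec_mulVec, Matrix.mul_nonsing_inv _ hA.det_pos.ne'.isUnit,
      Matrix.one_mulVec]
  have hBmul : B *ᵥ u = z := by
    rw [hu, Matrix.mulVec_mulVec, Matrix.mul_nonsing_inv _ hB.det_pos.ne'.isUnit,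
      Matrix.one_mulVec]
  have h1 : u ⬝ᵥ A *ᵥ v = p := by rw [hAmul, dotProduct_comm]
  have h2 : u ⬝ᵥ B *ᵥ u = p := by rw [hBmul, dotProduct_comm]
  have h3 : v ⬝ᵥ A *ᵥ v = q := by
    rw [hq, hv, Matrix.dotProduct_mulVec]
    congr 1
    rw [← Matrix.mulVec_transpose]
    have ht : Aᵀ = A := by
      rw [← Matrix.conjTranspose_eq_transpose_of_trivial]; exact hA.isHermitian
    rw [ht, hAmul]
  have hcs := psd_cauchy_schwarz hA.posSemidef u v
  rw [h1, h3] at hcs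
  have huAB : u ⬝ᵥ A *ᵥ u ≤ p := by
    have hd := psd_nonneg h u
    rw [Matrix.sub_mulVec, dotProduct_sub, sub_nonneg] at hd
    linarith [hd, h2]
  have hp0 : 0 ≤ p := psd_nonneg hB.inv.posSemidef z
  have hq0 : 0 ≤ q := psd_nonneg hA.inv.posSemidef z
  have huA0 : 0 ≤ u ⬝ᵥ A *ᵥ u := psd_nonneg hA.posSemidef u
  nlinarith [hcs, huAB, hp0, hq0, huA0]

lemma psd_smul {A : Matrix m m ℝ} (hA : A.PosSemidef) {c : ℝ} (hc : 0 ≤ c) :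
    (c • A).PosSemidef := by
  refine Matrix.PosSemidef.of_dotProduct_mulVec_nonneg ?_ fun x => ?_
  · simpa [Matrix.IsHermitian] using congrArg (c • ·) hA.isHermitian
  · simp only [star_trivial, Matrix.smul_mulVec, dotProduct_smul, smul_eq_mul]
    exact mul_nonneg hc (psd_nonneg hA x)

lemma smul_one_sub_psd {A : Matrix m m ℝ} (hA : A.IsHermitian) {c : ℝ}
    (h : ∀ i, hA.eigenvalues i ≤ c) : (c • (1 : Matrix m m ℝ) - A).PosSemidef := by
  set U : Matrix m m ℝ := (hA.eigenvectorUnitary : Matrix m m ℝ) with hUdef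
  have hU : U * star U = 1 := Matrix.mem_unitaryGroup_iff.mp hA.eigenvectorUnitary.2
  have key : c • (1 : Matrix m m ℝ) - A
      = U * Matrix.diagonal (fun i => c - hA.eigenvalues i) * star U := by
    conv_lhs => rw [hA.spectral_theorem]
    have hdiag : Matrix.diagonal (fun i => c - hA.eigenvalues i)
        = c • (1 : Matrix m m ℝ) - Matrix.diagonal (RCLike.ofReal ∘ hA.eigenvalues) := by
      rw [RCLike.ofReal_real_eq_id]
      ext i j
      by_cases hij : i = j <;> simp [Matrix.diagonal, hij, Matrix.one_apply]
    rw [hdiag, Matrix.mul_sub, Matrix.sub_mul, Matrix.mul_smul, Matrix.mul_one,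
      Matrix.smul_mul, hU]
    rfl
  rw [key]
  exact (Matrix.posSemidef_diagonal_iff.mpr
    fun i => sub_nonneg.mpr (h i)).mul_mul_conjTranspose_same U

lemma sub_smul_one_psd {A : Matrix m m ℝ} (hA : A.IsHermitian) {c : ℝ}
    (h : ∀ i, c ≤ hA.eigenvalues i) : (A - c • (1 : Matrix m m ℝ)).PosSemidef := by
  set U : Matrix m m ℝ := (hA.eigenvectorUnitary : Matrix m m ℝ) with hUdef
  have hU : U * star U = 1 := Matrix.mem_unitaryGroup_iff.mp hA.eigenvectorUnitary.2
  have key : A - c • (1 : Matrix m m ℝ)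
      = U * Matrix.diagonal (fun i => hA.eigenvalues i - c) * star U := by
    conv_lhs => rw [hA.spectral_theorem]
    have hdiag : Matrix.diagonal (fun i => hA.eigenvalues i - c)
        = Matrix.diagonal (RCLike.ofReal ∘ hA.eigenvalues) - c • (1 : Matrix m m ℝ) := by
      rw [RCLike.ofReal_real_eq_id]
      ext i j
      by_cases hij : i = j <;> simp [Matrix.diagonal, hij, Matrix.one_apply]
    rw [hdiag, Matrix.mul_sub, Matrix.sub_mul, Matrix.mul_smul, Matrix.mul_one,
      Matrix.smul_mul, hU]
    rfl
  rw [key]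
  exact (Matrix.posSemidef_diagonal_iff.mpr
    fun i => sub_nonneg.mpr (h i)).mul_mul_conjTranspose_same U

lemma pd_smul {A : Matrix m m ℝ} (hA : A.PosDef) {c : ℝ} (hc : 0 < c) :
    (c • A).PosDef := by
  refine Matrix.PosDef.of_dotProduct_mulVec_pos
    (psd_smul hA.posSemidef hc.le).isHermitian fun x hx => ?_
  simp only [star_trivial, Matrix.smul_mulVec, dotProduct_smul, smul_eq_mul]
  exact mul_pos hc (by simpa using hA.dotProduct_mulVec_pos hx)

lemma smul_inv_eq {A : Matrix m m ℝ} (hA : A.PosDef) {c : ℝ} (hc : c ≠ 0) :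
    (c • A)⁻¹ = c⁻¹ • A⁻¹ := by
  apply Matrix.inv_eq_left_inv
  rw [Matrix.smul_mul, Matrix.mul_smul, smul_smul, inv_mul_cancel₀ hc, one_smul,
    Matrix.nonsing_inv_mul _ hA.det_pos.ne'.isUnit]

end Aux

theorem Rt_minus_Rstar_bounds {n t : ℕ} (hn : 0 < n)
    (y : Fin n → ℝ) (Xt : Matrix (Fin n) (Fin t) ℝ)
    (At : Matrix (Fin t) (Fin t) ℝ) (a₁ a₂ ε τ : ℝ)
    (ha₁ : 0 < a₁) (ha : a₁ < a₂) (hε : 0 < ε) (hε1 : ε < 1) (hτ : 0 < τ)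
    (hXpd : (Xtᵀ * Xt).PosDef)
    (hAt : At.IsHermitian)
    (hAeig : ∀ i, a₁ < hAt.eigenvalues i ∧ hAt.eigenvalues i < a₂)
    (hX : ((1/(n:ℝ)) • (Xtᵀ * Xt)).IsHermitian)
    (hXeig : ∀ i, ε ≤ hX.eigenvalues i ∧ hX.eigenvalues i ≤ ε⁻¹) :
    let Pt : Matrix (Fin n) (Fin n) ℝ := Xt * (Xtᵀ * Xt)⁻¹ * Xtᵀ
    let Rstar : ℝ := y ⬝ᵥ ((1 - Pt).mulVec y)
    let Rt : ℝ := y ⬝ᵥ ((1 - Xt * (Xtᵀ * Xt + τ⁻¹ • At)⁻¹ * Xtᵀ).mulVec y)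
    0 ≤ Rt - Rstar ∧
    Rt - Rstar ≤ (a₂ / ((n:ℝ)*ε)) / (a₂ / ((n:ℝ)*ε) + τ) * (y ⬝ᵥ Pt.mulVec y) := by
  intro Pt Rstar Rt
  set S : Matrix (Fin t) (Fin t) ℝ := Xtᵀ * Xt with hSdef
  set C : Matrix (Fin t) (Fin t) ℝ := S + τ⁻¹ • At with hCdef
  set z : Fin t → ℝ := Xtᵀ *ᵥ y with hzdef
  set k : ℝ := a₂ / ((n:ℝ) * ε) with hkdef
  have hnε : (0:ℝ) < (n:ℝ) * ε := mul_pos (by exact_mod_cast hn) hε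
  have ha₂ : (0:ℝ) < a₂ := ha₁.trans ha
  have hk : 0 < k := div_pos ha₂ hnε
  have hkτ : 0 < k + τ := add_pos hk hτ
  have hApsd : At.PosSemidef :=
    hAt.posSemidef_iff_eigenvalues_nonneg.mpr fun i => (ha₁.trans (hAeig i).1).le
  have hC : C.PosDef := hXpd.add_posSemidef (psd_smul hApsd (inv_nonneg.mpr hτ.le))
  have hP1 : (S - ((n:ℝ) * ε) • (1 : Matrix (Fin t) (Fin t) ℝ)).PosSemidef := by
    have h0 : ((1/(n:ℝ)) • S - ε • (1 : Matrix (Fin t) (Fin t) ℝ)).PosSemidef :=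
      sub_smul_one_psd hX fun i => (hXeig i).1
    have h1 := psd_smul h0 (le_of_lt (show (0:ℝ) < (n:ℝ) by exact_mod_cast hn))
    have heq : (n:ℝ) • ((1/(n:ℝ)) • S - ε • (1 : Matrix (Fin t) (Fin t) ℝ))
        = S - ((n:ℝ) * ε) • (1 : Matrix (Fin t) (Fin t) ℝ) := by
      rw [smul_sub, smul_smul, smul_smul, mul_one_div,
        div_self (show ((n:ℝ)) ≠ 0 by exact_mod_cast hn.ne'), one_smul]
    rwa [heq] at h1
  have hP2 : (a₂ • (1 : Matrix (Fin t) (Fin t) ℝ) - At).PosSemidef :=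
    smul_one_sub_psd hAt fun i => (hAeig i).2.le
  set D : Matrix (Fin t) (Fin t) ℝ := ((k + τ)/τ) • S with hDdef
  have hD : D.PosDef := pd_smul hXpd (div_pos hkτ hτ)
  have hDC : (D - C).PosSemidef := by
    have hkn : k * ((n:ℝ) * ε) = a₂ := div_mul_cancel₀ _ hnε.ne'
    have hkn' : a₂ = k * ((n:ℝ) * ε) := hkn.symm
    have heq : D - C = τ⁻¹ • (k • (S - ((n:ℝ)*ε) • (1 : Matrix (Fin t) (Fin t) ℝ))
        + (a₂ • (1 : Matrix (Fin t) (Fin t) ℝ) - At)) := by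
      rw [hDdef, hCdef, hkn']
      match_scalars <;> field_simp <;> ring
    rw [heq]
    exact psd_smul ((psd_smul hP1 hk.le).add hP2) (inv_nonneg.mpr hτ.le)
  have hstep1 : (S⁻¹ - C⁻¹).PosSemidef := by
    refine inv_antitone hXpd hC ?_
    have hcs : C - S = τ⁻¹ • At := by rw [hCdef]; abel
    rw [hcs]
    exact psd_smul hApsd (inv_nonneg.mpr hτ.le)
  have hstep2 : (C⁻¹ - (τ/(k+τ)) • S⁻¹).PosSemidef := by
    have h := inv_antitone hC hD hDC
    have hDinv : D⁻¹ = (τ/(k+τ)) • S⁻¹ := by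
      rw [hDdef, smul_inv_eq hXpd (by positivity)]
      congr 1
      field_simp
    rwa [hDinv] at h
  have hform : ∀ M : Matrix (Fin t) (Fin t) ℝ,
      y ⬝ᵥ (Xt * M * Xtᵀ) *ᵥ y = z ⬝ᵥ M *ᵥ z := by
    intro M
    rw [← Matrix.mulVec_mulVec, ← Matrix.mulVec_mulVec, Matrix.dotProduct_mulVec,
      ← Matrix.mulVec_transpose, hzdef]
  have hdiff : Rt - Rstar = z ⬝ᵥ (S⁻¹ - C⁻¹) *ᵥ z := by
    have h1 : Rt = y ⬝ᵥ y - z ⬝ᵥ C⁻¹ *ᵥ z := by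
      show y ⬝ᵥ (1 - Xt * C⁻¹ * Xtᵀ) *ᵥ y = _
      rw [Matrix.sub_mulVec, dotProduct_sub, Matrix.one_mulVec, hform]
    have h2 : Rstar = y ⬝ᵥ y - z ⬝ᵥ S⁻¹ *ᵥ z := by
      show y ⬝ᵥ (1 - Xt * S⁻¹ * Xtᵀ) *ᵥ y = _
      rw [Matrix.sub_mulVec, dotProduct_sub, Matrix.one_mulVec, hform]
    rw [h1, h2, Matrix.sub_mulVec, dotProduct_sub]
    ring
  have hPty : y ⬝ᵥ Pt.mulVec y = z ⬝ᵥ S⁻¹ *ᵥ z := hform _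
  constructor
  · rw [hdiff]
    exact psd_nonneg hstep1 z
  · rw [hdiff, hPty]
    have h2 := psd_nonneg hstep2 z
    rw [Matrix.sub_mulVec, dotProduct_sub, Matrix.smul_mulVec,
      dotProduct_smul, smul_eq_mul, sub_nonneg] at h2
    rw [Matrix.sub_mulVec, dotProduct_sub]
    have hcoef : k / (k + τ) = 1 - τ/(k+τ) := by field_simp; ring
    rw [show a₂ / ((n:ℝ)*ε) / (a₂ / ((n:ℝ)*ε) + τ) = k / (k+τ) from rfl, hcoef]
    nlinarith [h2, psd_nonneg hXpd.inv.posSemidef z]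
end
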